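/- For the model y(t;ω) = Σ_k c_k e^{ikωt} (finite Fourier sum with nonzero amplitude c_k for some k ≠ 0), the diagonal Hessian entry H(T) = (1/T) ∫₀ᵀ |∂y/∂ω|² dt grows like T², i.e. there exist constants 0 < a ≤ b with a T² ≤ H(T) ≤ b T² for all sufficiently large T. -/

import Mathlib

open MeasureTheory Finset

section helpers

lemma my_int_re (f : ℝ → ℂ) (a b : ℝ) (hf : IntervalIntegrable f volume a b) :
    ∫ t in a..b, (f t).re = (∫ t in a..b, f t).re := by
  have h1 := integral_re hf.1
  have h2 := integral_re hf.2
  simp only [RCLike.re_to_complex] at h1 h2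
  simp [intervalIntegral, Complex.sub_re, h1, h2]

lemma osc_antideriv (d : ℂ) (hd : d ≠ 0) (T : ℝ) :
    ∫ t in (0:ℝ)..T, (t:ℂ)^2 * Complex.exp (d * t)
      = Complex.exp (d*T) * ((T:ℂ)^2/d - 2*T/d^2 + 2/d^3) - 2/d^3 := by
  have key : ∀ z : ℂ, HasDerivAt (fun z : ℂ => Complex.exp (d*z) * (z^2/d - 2*z/d^2 + 2/d^3))
      (z^2 * Complex.exp (d*z)) z := by
    intro z
    have h1 : HasDerivAt (fun z : ℂ => Complex.exp (d*z)) (Complex.exp (d*z) * d) z := by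
      simpa using ((hasDerivAt_id z).const_mul d).cexp
    have h2 : HasDerivAt (fun z : ℂ => z^2/d - 2*z/d^2 + 2/d^3) (2*z/d - 2/d^2) z := by
      have := (((hasDerivAt_pow 2 z).div_const d).sub
        (((hasDerivAt_id z).const_mul 2).div_const (d^2))).add_const (2/d^3)
      refine this.congr_deriv ?_
      ring
    have hm := h1.mul h2
    have e : d * (z^2/d - 2*z/d^2 + 2/d^3) + (2*z/d - 2/d^2) = z^2 := by
      field_simp
      ring
    refine hm.congr_deriv (Eq.symm ?_)
    calc z^2 * Complex.exp (d*z)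
        = Complex.exp (d*z) * (d * (z^2/d - 2*z/d^2 + 2/d^3) + (2*z/d - 2/d^2)) := by rw [e]; ring
      _ = _ := by ring
  have hint : IntervalIntegrable (fun t : ℝ => (t:ℂ)^2 * Complex.exp (d * t)) volume 0 T := by
    apply Continuous.intervalIntegrable
    continuity
  have := intervalIntegral.integral_eq_sub_of_hasDerivAt
    (f := fun t : ℝ => Complex.exp (d*t) * ((t:ℂ)^2/d - 2*t/d^2 + 2/d^3))
    (f' := fun t : ℝ => (t:ℂ)^2 * Complex.exp (d*t))
    (fun x _ => (key (x:ℂ)).comp_ofReal) hint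
  rw [this]
  simp

lemma osc_norm_bound (ω r T : ℝ) (hω : ω ≠ 0) (hr : |ω| ≤ |r|) (hT : 1 ≤ T) :
    ‖∫ t in (0:ℝ)..T, (t:ℂ)^2 * Complex.exp (Complex.I * r * t)‖
      ≤ (1/|ω| + 2/|ω|^2 + 4/|ω|^3) * T^2 := by
  have hω0 : (0:ℝ) < |ω| := abs_pos.2 hω
  have hr0 : (0:ℝ) < |r| := lt_of_lt_of_le hω0 hr
  have hT0 : (0:ℝ) ≤ T := le_trans zero_le_one hT
  have hd : (Complex.I * (r:ℂ)) ≠ 0 :=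
    mul_ne_zero Complex.I_ne_zero (by exact_mod_cast abs_pos.1 hr0)
  rw [osc_antideriv (Complex.I * (r:ℂ)) hd T]
  have hnd : ‖(Complex.I * (r:ℂ))‖ = |r| := by
    simp [Complex.norm_I, Complex.norm_real]
  have hexp : ‖Complex.exp (Complex.I * (r:ℂ) * T)‖ = 1 := by
    rw [Complex.norm_exp]
    simp [Complex.mul_re]
  have h1 : ‖((T:ℂ)^2/(Complex.I*(r:ℂ)))‖ = T^2/|r| := by
    rw [norm_div, hnd, norm_pow]
    simp [Complex.norm_real, abs_of_nonneg hT0]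
  have h2 : ‖(2*(T:ℂ)/(Complex.I*(r:ℂ))^2)‖ = 2*T/|r|^2 := by
    rw [norm_div, norm_pow, hnd, norm_mul]
    simp [Complex.norm_real, abs_of_nonneg hT0]
  have h3 : ‖(2/(Complex.I*(r:ℂ))^3)‖ = 2/|r|^3 := by
    rw [norm_div, norm_pow, hnd]
    simp
  calc ‖Complex.exp (Complex.I*(r:ℂ)*T) * ((T:ℂ)^2/(Complex.I*(r:ℂ)) - 2*T/(Complex.I*(r:ℂ))^2
          + 2/(Complex.I*(r:ℂ))^3) - 2/(Complex.I*(r:ℂ))^3‖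
      ≤ ‖Complex.exp (Complex.I*(r:ℂ)*T) * ((T:ℂ)^2/(Complex.I*(r:ℂ)) - 2*T/(Complex.I*(r:ℂ))^2
          + 2/(Complex.I*(r:ℂ))^3)‖ + ‖(2/(Complex.I*(r:ℂ))^3 : ℂ)‖ := norm_sub_le _ _
    _ ≤ (‖((T:ℂ)^2/(Complex.I*(r:ℂ)))‖ + ‖(2*(T:ℂ)/(Complex.I*(r:ℂ))^2)‖
          + ‖(2/(Complex.I*(r:ℂ))^3 : ℂ)‖) + ‖(2/(Complex.I*(r:ℂ))^3 : ℂ)‖ := by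
        rw [norm_mul, hexp, one_mul]
        gcongr
        exact le_trans (norm_add_le _ _) (by gcongr; exact norm_sub_le _ _)
    _ = T^2/|r| + 2*T/|r|^2 + 2/|r|^3 + 2/|r|^3 := by rw [h1, h2, h3]
    _ ≤ T^2/|ω| + 2*T^2/|ω|^2 + 2*T^2/|ω|^3 + 2*T^2/|ω|^3 := by
        have e1 : T^2/|r| ≤ T^2/|ω| := by gcongr
        have e2 : 2*T/|r|^2 ≤ 2*T^2/|ω|^2 := by gcongr <;> nlinarith
        have e3 : 2/|r|^3 ≤ 2*T^2/|ω|^3 := by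
          have i1 : 2/|r|^3 ≤ 2/|ω|^3 := by gcongr
          have i2 : 2/|ω|^3 ≤ 2*T^2/|ω|^3 := by gcongr <;> nlinarith
          linarith
        linarith
    _ = (1/|ω| + 2/|ω|^2 + 4/|ω|^3) * T^2 := by ring

lemma pointwise_sq (N : ℕ) (c : ℤ → ℂ) (ω t : ℝ) :
    ‖∑ k ∈ Finset.Icc (-(N:ℤ)) N,
        Complex.I * (k : ℂ) * (t : ℂ) * c k *
          Complex.exp (Complex.I * (k : ℂ) * (ω : ℂ) * (t : ℂ))‖ ^ 2
    = (∑ k ∈ Finset.Icc (-(N:ℤ)) N, ∑ l ∈ Finset.Icc (-(N:ℤ)) N,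
        ((Complex.I * (k:ℂ) * c k) * (starRingEnd ℂ) (Complex.I * (l:ℂ) * c l)) *
          ((t:ℂ)^2 * Complex.exp (Complex.I * ((((k - l : ℤ) : ℝ) * ω : ℝ) : ℂ) * (t:ℂ)))).re := by
  have h0 : ∀ z : ℂ, ‖z‖^2 = (z * (starRingEnd ℂ) z).re := by
    intro z
    rw [Complex.mul_conj]
    simp only [Complex.normSq_eq_norm_sq, ← Complex.ofReal_pow,
      Complex.ofReal_re]
  rw [h0]
  congr 1
  rw [map_sum, Finset.sum_mul_sum]
  refine Finset.sum_congr rfl fun k _ => Finset.sum_congr rfl fun l _ => ?_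
  have hconj : (starRingEnd ℂ) (Complex.I * (l:ℂ) * (t:ℂ) * c l *
      Complex.exp (Complex.I * (l:ℂ) * (ω:ℂ) * (t:ℂ)))
      = (-Complex.I) * (l:ℂ) * (t:ℂ) * (starRingEnd ℂ) (c l) *
          Complex.exp (-(Complex.I * (l:ℂ) * (ω:ℂ) * (t:ℂ))) := by
    simp only [map_mul, Complex.conj_I, Complex.conj_ofReal, map_intCast, ← Complex.exp_conj]
    ring_nf
  have hconj2 : (starRingEnd ℂ) (Complex.I * (l:ℂ) * c l)
      = (-Complex.I) * (l:ℂ) * (starRingEnd ℂ) (c l) := by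
    simp only [map_mul, Complex.conj_I, map_intCast]
  have he : Complex.exp (Complex.I * (k:ℂ) * (ω:ℂ) * (t:ℂ)) *
      Complex.exp (-(Complex.I * (l:ℂ) * (ω:ℂ) * (t:ℂ)))
      = Complex.exp (Complex.I * ((((k - l : ℤ) : ℝ) * ω : ℝ) : ℂ) * (t:ℂ)) := by
    rw [← Complex.exp_add]
    congr 1
    push_cast
    ring
  rw [hconj, hconj2, ← he]
  ring

end helpers

theorem stmt_5 (N : ℕ) (c : ℤ → ℂ) (ω : ℝ) (hω : ω ≠ 0)
    (hreal : ∀ k : ℤ, c (-k) = starRingEnd ℂ (c k))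
    (hnz : ∃ k : ℤ, k ∈ Finset.Icc (-(N:ℤ)) N ∧ k ≠ 0 ∧ c k ≠ 0) :
    ∃ a b : ℝ, 0 < a ∧ a ≤ b ∧ ∃ T₀ : ℝ, 0 < T₀ ∧ ∀ T : ℝ, T₀ ≤ T →
      a * T ^ 2 ≤
        (1 / T) * ∫ t in (0:ℝ)..T,
          ‖∑ k ∈ Finset.Icc (-(N:ℤ)) N,
            Complex.I * (k : ℂ) * (t : ℂ) * c k *
              Complex.exp (Complex.I * (k : ℂ) * (ω : ℂ) * (t : ℂ))‖ ^ 2 ∧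
      (1 / T) * ∫ t in (0:ℝ)..T,
          ‖∑ k ∈ Finset.Icc (-(N:ℤ)) N,
            Complex.I * (k : ℂ) * (t : ℂ) * c k *
              Complex.exp (Complex.I * (k : ℂ) * (ω : ℂ) * (t : ℂ))‖ ^ 2
        ≤ b * T ^ 2 := by
  classical
  set G := Finset.Icc (-(N:ℤ)) N with hG
  set w : ℤ → ℂ := fun k => Complex.I * (k:ℂ) * c k with hw
  set S : ℝ := ∑ k ∈ G, ‖w k‖^2 with hS
  set A : ℝ := ∑ k ∈ G, ‖w k‖ with hA
  set D : ℝ := 1/|ω| + 2/|ω|^2 + 4/|ω|^3 with hD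
  set K : ℝ := D * A^2 with hK
  have hω0 : (0:ℝ) < |ω| := abs_pos.2 hω
  have hD0 : 0 < D := by positivity
  have hA0 : 0 ≤ A := Finset.sum_nonneg fun _ _ => norm_nonneg _
  have hK0 : 0 ≤ K := by positivity
  have hS0 : 0 < S := by
    obtain ⟨k₀, hk₀G, hk₀, hck₀⟩ := hnz
    have hwk : w k₀ ≠ 0 := by
      simp only [hw]
      exact mul_ne_zero (mul_ne_zero Complex.I_ne_zero
        (by exact_mod_cast hk₀)) hck₀
    have h1 : 0 < ‖w k₀‖^2 := pow_pos (norm_pos_iff.2 hwk) 2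
    exact lt_of_lt_of_le h1 (Finset.single_le_sum (f := fun k => ‖w k‖^2)
      (fun i _ => sq_nonneg _) hk₀G)
  refine ⟨S/6, S/3 + K, by positivity, by nlinarith, max 1 (6*K/S),
    lt_of_lt_of_le one_pos (le_max_left _ _), ?_⟩
  intro T hT
  have hT1 : 1 ≤ T := le_trans (le_max_left _ _) hT
  have hT0 : (0:ℝ) < T := lt_of_lt_of_le one_pos hT1
  have hTK : 6*K/S ≤ T := le_trans (le_max_right _ _) hT
  -- the complex double-sum integrand
  set F : ℝ → ℂ := fun t => ∑ k ∈ G, ∑ l ∈ G,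
      (w k * (starRingEnd ℂ) (w l)) *
        ((t:ℂ)^2 * Complex.exp (Complex.I * ((((k - l : ℤ) : ℝ) * ω : ℝ) : ℂ) * (t:ℂ))) with hF
  have hcont : ∀ k l : ℤ, Continuous (fun t : ℝ =>
      (w k * (starRingEnd ℂ) (w l)) *
        ((t:ℂ)^2 * Complex.exp (Complex.I * ((((k - l : ℤ) : ℝ) * ω : ℝ) : ℂ) * (t:ℂ)))) := by
    intro k l
    exact continuous_const.mul ((Complex.continuous_ofReal.pow 2).mul
      ((continuous_const.mul Complex.continuous_ofReal).cexp))
  have hFcont : Continuous F := by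
    rw [hF]
    exact continuous_finset_sum _ fun k _ => continuous_finset_sum _ fun l _ => hcont k l
  have hFI : IntervalIntegrable F volume 0 T := hFcont.intervalIntegrable _ _
  have hIeq : (∫ t in (0:ℝ)..T,
      ‖∑ k ∈ G, Complex.I * (k : ℂ) * (t : ℂ) * c k *
          Complex.exp (Complex.I * (k : ℂ) * (ω : ℂ) * (t : ℂ))‖ ^ 2)
      = (∫ t in (0:ℝ)..T, F t).re := by
    rw [← my_int_re F 0 T hFI]
    apply intervalIntegral.integral_congr
    intro t _
    exact pointwise_sq N c ω t
  set J : ℤ → ℤ → ℂ := fun k l => ∫ t in (0:ℝ)..T,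
      (t:ℂ)^2 * Complex.exp (Complex.I * ((((k - l : ℤ) : ℝ) * ω : ℝ) : ℂ) * (t:ℂ)) with hJ
  have hswap : (∫ t in (0:ℝ)..T, F t)
      = ∑ k ∈ G, ∑ l ∈ G, (w k * (starRingEnd ℂ) (w l)) * J k l := by
    rw [hF, intervalIntegral.integral_finset_sum (fun k _ =>
      (continuous_finset_sum _ fun l _ => hcont k l).intervalIntegrable _ _)]
    refine Finset.sum_congr rfl fun k _ => ?_
    rw [intervalIntegral.integral_finset_sum (fun l _ => (hcont k l).intervalIntegrable _ _)]
    refine Finset.sum_congr rfl fun l _ => ?_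
    rw [hJ, intervalIntegral.integral_const_mul]
  have hJdiag : ∀ k : ℤ, J k k = ((T^3/3 : ℝ) : ℂ) := by
    intro k
    rw [hJ]
    simp only [sub_self, Int.cast_zero, zero_mul, Complex.ofReal_zero, mul_zero, zero_mul,
      Complex.exp_zero, mul_one]
    have : ∀ t : ℝ, ((t:ℂ))^2 = ((t^2 : ℝ) : ℂ) := by intro t; push_cast; ring
    simp_rw [this]
    rw [intervalIntegral.integral_ofReal, integral_pow]
    norm_num
  have hJoff : ∀ k l : ℤ, k ≠ l → ‖J k l‖ ≤ D * T^2 := by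
    intro k l hkl
    rw [hJ, hD]
    apply osc_norm_bound ω _ T hω _ hT1
    have h1 : (1:ℝ) ≤ |((k - l : ℤ) : ℝ)| := by
      rw [← Int.cast_abs]
      exact_mod_cast Int.one_le_abs (sub_ne_zero.2 hkl)
    rw [abs_mul]
    nlinarith
  -- split sum into diagonal and off-diagonal
  have hmulconj : ∀ z : ℂ, z * (starRingEnd ℂ) z = ((‖z‖^2 : ℝ) : ℂ) := by
    intro z
    rw [Complex.mul_conj]
    simp [Complex.normSq_eq_norm_sq]
  have hsplit : ∑ k ∈ G, ∑ l ∈ G, (w k * (starRingEnd ℂ) (w l)) * J k l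
      = ((S * (T^3/3) : ℝ) : ℂ)
        + ∑ k ∈ G, ∑ l ∈ G.erase k, (w k * (starRingEnd ℂ) (w l)) * J k l := by
    have step : ∀ k ∈ G, ∑ l ∈ G, (w k * (starRingEnd ℂ) (w l)) * J k l
        = ((‖w k‖^2 * (T^3/3) : ℝ) : ℂ)
          + ∑ l ∈ G.erase k, (w k * (starRingEnd ℂ) (w l)) * J k l := by
      intro k hk
      rw [← Finset.add_sum_erase G _ hk, hJdiag k, hmulconj (w k)]
      push_cast
      ring
    rw [Finset.sum_congr rfl step, Finset.sum_add_distrib]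
    congr 1
    rw [hS]
    push_cast
    rw [Finset.sum_mul]
  set E : ℂ := ∑ k ∈ G, ∑ l ∈ G.erase k, (w k * (starRingEnd ℂ) (w l)) * J k l with hE
  have hEnorm : ‖E‖ ≤ K * T^2 := by
    rw [hE]
    calc ‖∑ k ∈ G, ∑ l ∈ G.erase k, (w k * (starRingEnd ℂ) (w l)) * J k l‖
        ≤ ∑ k ∈ G, ‖∑ l ∈ G.erase k, (w k * (starRingEnd ℂ) (w l)) * J k l‖ :=
          norm_sum_le _ _
      _ ≤ ∑ k ∈ G, ∑ l ∈ G.erase k, ‖(w k * (starRingEnd ℂ) (w l)) * J k l‖ :=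
          Finset.sum_le_sum fun k _ => norm_sum_le _ _
      _ ≤ ∑ k ∈ G, ∑ l ∈ G.erase k, ‖w k‖ * ‖w l‖ * (D * T^2) := by
          refine Finset.sum_le_sum fun k _ => Finset.sum_le_sum fun l hl => ?_
          rw [norm_mul, norm_mul, RCLike.norm_conj]
          exact mul_le_mul_of_nonneg_left (hJoff k l (Finset.ne_of_mem_erase hl).symm)
            (by positivity)
      _ ≤ ∑ k ∈ G, ‖w k‖ * A * (D * T^2) := by
          refine Finset.sum_le_sum fun k _ => ?_
          have hsub : ∑ l ∈ G.erase k, ‖w l‖ ≤ A :=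
            Finset.sum_le_sum_of_subset_of_nonneg (Finset.erase_subset _ _)
              (fun i _ _ => norm_nonneg _)
          calc ∑ l ∈ G.erase k, ‖w k‖ * ‖w l‖ * (D * T^2)
              = (∑ l ∈ G.erase k, ‖w l‖) * (‖w k‖ * (D * T^2)) := by
                rw [Finset.sum_mul]
                exact Finset.sum_congr rfl fun l _ => by ring
            _ ≤ A * (‖w k‖ * (D * T^2)) := mul_le_mul_of_nonneg_right hsub (by positivity)
            _ = ‖w k‖ * A * (D * T^2) := by ring
      _ = K * T^2 := by
          rw [← Finset.sum_mul, ← Finset.sum_mul, ← hA, hK]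
          ring
  have hre : |(∫ t in (0:ℝ)..T, F t).re - S * (T^3/3)| ≤ K * T^2 := by
    rw [hswap, hsplit]
    have : (((S * (T^3/3) : ℝ) : ℂ) + E).re = S * (T^3/3) + E.re := by
      rw [Complex.add_re, Complex.ofReal_re]
    rw [this, add_sub_cancel_left]
    exact le_trans (Complex.abs_re_le_norm E) hEnorm
  rw [hIeq]
  have hlow : S * (T^3/3) - K * T^2 ≤ (∫ t in (0:ℝ)..T, F t).re := by
    have := abs_le.1 hre
    linarith [this.1]
  have hup : (∫ t in (0:ℝ)..T, F t).re ≤ S * (T^3/3) + K * T^2 := by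
    have := abs_le.1 hre
    linarith [this.2]
  have hKT : K * T^2 ≤ S/6 * T^3 := by
    have h6 : 6*K ≤ S*T := by
      rw [div_le_iff₀ hS0] at hTK
      linarith
    nlinarith
  have hup2 : (∫ t in (0:ℝ)..T, F t).re ≤ (S/3 + K) * T^3 := by
    nlinarith [mul_nonneg (mul_nonneg hK0 (pow_nonneg hT0.le 2)) (sub_nonneg.2 hT1)]
  have hlow2 : S/6 * T^3 ≤ (∫ t in (0:ℝ)..T, F t).re := by linarith
  constructor
  · calc S/6 * T^2 = (1/T) * (S/6 * T^3) := by
          rw [one_div, inv_mul_eq_div, eq_div_iff hT0.ne']; ring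
      _ ≤ (1/T) * (∫ t in (0:ℝ)..T, F t).re :=
          mul_le_mul_of_nonneg_left hlow2 (by positivity)
  · calc (1/T) * (∫ t in (0:ℝ)..T, F t).re ≤ (1/T) * ((S/3 + K) * T^3) :=
          mul_le_mul_of_nonneg_left hup2 (by positivity)
      _ = (S/3 + K) * T^2 := by
          rw [one_div, inv_mul_eq_div, div_eq_iff hT0.ne']; ring
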